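/- arXiv:2105.01560 — 4 statements merged into one kernel-verified Lean document; each statement's English description precedes it below -/
import Mathlib

section
/- Under the redistribution hypotheses (P' agrees with P outside X̃, P'(X̃ ∩ {f = -1}) = 0, and P'(E) ≥ P(E) for measurable E ⊆ X̃ ∩ {f = 1}), if P(X̃ ∩ {x : f(x) = 1}) > γ and P'{x : g(x) ≠ f(x)} < ε with ε < γ, then P{x ∈ X̃ : g(x) = 1} > γ - ε. -/
open MeasureTheory
open scoped ENNReal

/-- Part 1 of the omission-attack theorem: after learning from the attacked
distribution `P'`, the learner labels a `γ - ε` fraction (under `P`) of the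
attacked region `X̃` as `1`. -/
theorem attack_success_region {X : Type*} [MeasurableSpace X]
    (P P' : Measure X) [IsProbabilityMeasure P] [IsProbabilityMeasure P']
    (Xt : Set X) (hXt : MeasurableSet Xt)
    (f g : X → ℤ) (hf : Measurable f) (hg : Measurable g)
    (hfr : ∀ x, f x = 1 ∨ f x = -1) (hgr : ∀ x, g x = 1 ∨ g x = -1)
    (hagree : ∀ E : Set X, MeasurableSet E → E ⊆ Xtᶜ → P' E = P E)
    (hnull : P' (Xt ∩ {x | f x = -1}) = 0)
    (hdom : ∀ E : Set X, MeasurableSet E → E ⊆ Xt ∩ {x | f x = 1} → P' E ≥ P E)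
    (γ ε : ℝ≥0∞) (hγ1 : γ < 1) (hε1 : ε < 1) (hεγ : ε < γ)
    (hmass : P (Xt ∩ {x | f x = 1}) > γ)
    (herr : P' {x | g x ≠ f x} < ε) :
    P {x ∈ Xt | g x = 1} > γ - ε := by
  set A : Set X := Xt ∩ {x | f x = 1} with hA
  set S : Set X := A ∩ {x | g x ≠ f x} with hS
  have hSm : MeasurableSet S := by
    apply (hXt.inter (hf (measurableSet_singleton (1 : ℤ)))).inter
    exact (measurableSet_eq_fun hg hf).compl
  have hPS : P S ≤ P' S := hdom S hSm Set.inter_subset_left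
  have hPSε : P S < ε := lt_of_le_of_lt (hPS.trans (measure_mono Set.inter_subset_right)) herr
  have hsub : A ⊆ {x ∈ Xt | g x = 1} ∪ S := by
    intro x hx
    by_cases h : g x = 1
    · exact Or.inl ⟨hx.1, h⟩
    · exact Or.inr ⟨hx, fun he => h (he.trans hx.2)⟩
  have hPA : P A ≤ P {x ∈ Xt | g x = 1} + P S :=
    (measure_mono hsub).trans (measure_union_le _ _)
  have hlt : γ < P {x ∈ Xt | g x = 1} + ε :=
    lt_of_lt_of_le hmass (hPA.trans (add_le_add_right hPSε.le _))
  have hεne : ε ≠ ∞ := hε1.ne_top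
  exact ENNReal.sub_lt_of_lt_add hεγ.le hlt
end

section
/- Under the redistribution hypotheses (P' agrees with P outside X̃, P'(X̃ ∩ {f = -1}) = 0, and P'(E) ≥ P(E) for measurable E ⊆ X̃ ∩ {f = 1}), if P'{x : g(x) ≠ f(x)} < ε and P(X̃ ∩ {x : f(x) = -1}) < γ', then P{x : g(x) ≠ f(x)} < ε + γ'. -/
open MeasureTheory
open scoped ENNReal

/-- Part 2 of the omission-attack theorem: the learner's true error under `P`
after the attack is bounded by its error under `P'` plus the `P`-mass of the
omitted region `X̃ ∩ {f = -1}`. -/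
theorem attack_accuracy_preserved {X : Type*} [MeasurableSpace X]
    (P P' : Measure X) [IsProbabilityMeasure P] [IsProbabilityMeasure P']
    (Xt : Set X) (hXt : MeasurableSet Xt)
    (f g : X → ℤ) (hf : Measurable f) (hg : Measurable g)
    (hfr : ∀ x, f x = 1 ∨ f x = -1) (hgr : ∀ x, g x = 1 ∨ g x = -1)
    (hagree : ∀ E : Set X, MeasurableSet E → E ⊆ Xtᶜ → P' E = P E)
    (hnull : P' (Xt ∩ {x | f x = -1}) = 0)
    (hdom : ∀ E : Set X, MeasurableSet E → E ⊆ Xt ∩ {x | f x = 1} → P' E ≥ P E)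
    (ε γ' : ℝ≥0∞) (herr : P' {x | g x ≠ f x} < ε)
    (homit : P (Xt ∩ {x | f x = -1}) < γ') :
    P {x | g x ≠ f x} < ε + γ' := by
  set S : Set X := {x | g x ≠ f x} with hSdef
  have hS : MeasurableSet S := by
    have : MeasurableSet {x | g x = f x} := measurableSet_eq_fun hg hf
    simpa [S, Set.compl_setOf] using this.compl
  have hf1 : MeasurableSet {x | f x = (1 : ℤ)} := hf (measurableSet_singleton 1)
  have hfm1 : MeasurableSet {x | f x = (-1 : ℤ)} := hf (measurableSet_singleton (-1))
  -- decompose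
  set A : Set X := S ∩ Xtᶜ with hAdef
  set B : Set X := S ∩ (Xt ∩ {x | f x = 1}) with hBdef
  set C : Set X := Xt ∩ {x | f x = -1} with hCdef
  have hA : MeasurableSet A := hS.inter hXt.compl
  have hB : MeasurableSet B := hS.inter (hXt.inter hf1)
  have hsub : S ⊆ A ∪ B ∪ C := by
    intro x hx
    by_cases hxt : x ∈ Xt
    · rcases hfr x with h1 | h1
      · exact Or.inl (Or.inr ⟨hx, hxt, h1⟩)
      · exact Or.inr ⟨hxt, h1⟩
    · exact Or.inl (Or.inl ⟨hx, hxt⟩)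
  have hAB : P (A ∪ B) < ε := by
    have hdisj : Disjoint A B := by
      apply Set.disjoint_left.mpr
      rintro x ⟨-, hxc⟩ ⟨-, hxt, -⟩
      exact hxc hxt
    have h1 : P A = P' A := (hagree A hA Set.inter_subset_right).symm
    have h2 : P B ≤ P' B := hdom B hB Set.inter_subset_right
    have : P (A ∪ B) ≤ P' (A ∪ B) := by
      rw [measure_union hdisj hB, measure_union hdisj hB, h1]
      exact add_le_add le_rfl h2
    calc P (A ∪ B) ≤ P' (A ∪ B) := this
      _ ≤ P' S := measure_mono (Set.union_subset Set.inter_subset_left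
          Set.inter_subset_left)
      _ < ε := herr
  calc P S ≤ P (A ∪ B ∪ C) := measure_mono hsub
    _ ≤ P (A ∪ B) + P C := measure_union_le _ _
    _ < ε + γ' := ENNReal.add_lt_add hAB homit
end

section
/- Let P, P' be probability measures with P'(E) = P(E) for measurable E ⊆ X \ X̃ and P'(X̃ ∩ {f = -1}) = 0 and P'(E) ≥ P(E) for E ⊆ X̃ ∩ {f = 1}. Then for every h : X → {-1,1} measurable, P'({x : h(x) ≠ f(x)}) ≥ P({x : h(x) ≠ f(x)}) - P(X̃ ∩ {x : f(x) = -1}). -/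
open MeasureTheory

/-- The attack can reduce the loss of any hypothesis `h` by at most the
omitted mass `P(X̃ ∩ {f = -1})`. -/
theorem attacked_loss_lower_bound {X : Type*} [MeasurableSpace X]
    (P P' : Measure X) [IsProbabilityMeasure P] [IsProbabilityMeasure P']
    (Xt : Set X) (hXt : MeasurableSet Xt)
    (f : X → ℤ) (hf : Measurable f) (hfr : ∀ x, f x = 1 ∨ f x = -1)
    (hagree : ∀ E : Set X, MeasurableSet E → E ⊆ Xtᶜ → P' E = P E)
    (hnull : P' (Xt ∩ {x | f x = -1}) = 0)
    (hdom : ∀ E : Set X, MeasurableSet E → E ⊆ Xt ∩ {x | f x = 1} → P' E ≥ P E) :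
    ∀ h : X → ℤ, Measurable h → (∀ x, h x = 1 ∨ h x = -1) →
      P' {x | h x ≠ f x} ≥ P {x | h x ≠ f x} - P (Xt ∩ {x | f x = -1}) := by
  intro h hh hhr
  set E := {x | h x ≠ f x} with hEdef
  have hE : MeasurableSet E := by
    have hEq : E = (fun x => h x - f x) ⁻¹' ({0}ᶜ) := by
      ext x; simp [hEdef, sub_eq_zero]
    rw [hEq]
    exact (hh.sub hf) (measurableSet_singleton 0).compl
  have hf1 : MeasurableSet {x | f x = 1} := hf (measurableSet_singleton 1)
  set A := E ∩ Xtᶜ with hA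
  set B := E ∩ (Xt ∩ {x | f x = 1}) with hB
  have hAm : MeasurableSet A := hE.inter hXt.compl
  have hBm : MeasurableSet B := hE.inter (hXt.inter hf1)
  have hsub : E ⊆ A ∪ B ∪ (Xt ∩ {x | f x = -1}) := by
    intro x hx
    by_cases hxXt : x ∈ Xt
    · rcases hfr x with hfx | hfx
      · exact Or.inl (Or.inr ⟨hx, hxXt, hfx⟩)
      · exact Or.inr ⟨hxXt, hfx⟩
    · exact Or.inl (Or.inl ⟨hx, hxXt⟩)
  have h1 : P E ≤ P A + P B + P (Xt ∩ {x | f x = -1}) := by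
    calc P E ≤ P (A ∪ B ∪ (Xt ∩ {x | f x = -1})) := measure_mono hsub
    _ ≤ P (A ∪ B) + P (Xt ∩ {x | f x = -1}) := measure_union_le _ _
    _ ≤ P A + P B + P (Xt ∩ {x | f x = -1}) := by
        gcongr; exact measure_union_le _ _
  have hPA : P A = P' A := (hagree A hAm (fun x hx => hx.2)).symm
  have hPB : P B ≤ P' B := hdom B hBm (fun x hx => hx.2)
  have h2 : P' A + P' B ≤ P' E := by
    have hdisj : Disjoint A B := by
      apply Set.disjoint_left.mpr
      intro x hxA hxB
      exact hxA.2 hxB.2.1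
    rw [← measure_union hdisj hBm]
    exact measure_mono (Set.union_subset (fun x hx => hx.1) (fun x hx => hx.1))
  rw [ge_iff_le, tsub_le_iff_right]
  calc P E ≤ P A + P B + P (Xt ∩ {x | f x = -1}) := h1
  _ ≤ P' A + P' B + P (Xt ∩ {x | f x = -1}) := by rw [hPA]; gcongr
  _ ≤ P' E + P (Xt ∩ {x | f x = -1}) := by gcongr
end

section
/- Let ε, δ, γ, γ' ∈ (0,1) with γ > ε, and suppose: (i) with probability at least 1 - δ the learner's output g satisfies P'({g ≠ f}) < ε; (ii) P' agrees with P outside X̃, P'(X̃ ∩ {f = -1}) = 0, and P' dominates P on subsets of X̃ ∩ {f = 1}; (iii) P(X̃ ∩ {f = 1}) > γ and P(X̃ ∩ {f = -1}) < γ'. Then with probability at least 1 - δ both conclusions hold simultaneously: P({x ∈ X̃ : g(x) = 1}) > γ - ε and P({x : g(x) ≠ f(x)}) < ε + γ'. -/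
open MeasureTheory
open scoped ENNReal

/-- Full statement of Theorem 1 of the paper (with `min_{h∈H} Ls(h)` absorbed
into `ε`): with probability at least `1 - δ` over the sample `ω`, both the
targeted-misclassification guarantee and the accuracy-preservation guarantee
hold simultaneously. -/
theorem omission_attack_theorem {X Ω : Type*} [MeasurableSpace X] [MeasurableSpace Ω]
    (P P' : Measure X) [IsProbabilityMeasure P] [IsProbabilityMeasure P']
    (μ : Measure Ω) [IsProbabilityMeasure μ]
    (Xt : Set X) (hXt : MeasurableSet Xt)
    (f : X → ℤ) (hf : Measurable f) (hfr : ∀ x, f x = 1 ∨ f x = -1)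
    (g : Ω → X → ℤ) (hg : ∀ ω, Measurable (g ω))
    (hgr : ∀ ω x, g ω x = 1 ∨ g ω x = -1)
    (ε δ γ γ' : ℝ)
    (hε : ε ∈ Set.Ioo (0 : ℝ) 1) (hδ : δ ∈ Set.Ioo (0 : ℝ) 1)
    (hγ : γ ∈ Set.Ioo (0 : ℝ) 1) (hγ' : γ' ∈ Set.Ioo (0 : ℝ) 1)
    (hγε : γ > ε)
    -- (i) high-probability small loss under P'
    (hlearn : μ {ω | P' {x | g ω x ≠ f x} < ENNReal.ofReal ε} ≥ ENNReal.ofReal (1 - δ))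
    -- (ii) redistribution hypotheses relating P' and P
    (hagree : ∀ E : Set X, MeasurableSet E → E ⊆ Xtᶜ → P' E = P E)
    (hnull : P' (Xt ∩ {x | f x = -1}) = 0)
    (hdom : ∀ E : Set X, MeasurableSet E → E ⊆ Xt ∩ {x | f x = 1} → P' E ≥ P E)
    -- (iii) mass conditions on the attacked region
    (hmass : P (Xt ∩ {x | f x = 1}) > ENNReal.ofReal γ)
    (homit : P (Xt ∩ {x | f x = -1}) < ENNReal.ofReal γ') :
    μ {ω | P {x ∈ Xt | g ω x = 1} > ENNReal.ofReal (γ - ε) ∧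
           P {x | g ω x ≠ f x} < ENNReal.ofReal (ε + γ')} ≥ ENNReal.ofReal (1 - δ) := by
  refine le_trans hlearn (measure_mono ?_)
  intro ω hω
  simp only [Set.mem_setOf_eq] at hω ⊢
  set S : Set X := {x | g ω x ≠ f x} with hS
  have hSm : MeasurableSet S := by
    rw [hS, show {x | g ω x ≠ f x} = {x | g ω x = f x}ᶜ from rfl]
    exact (measurableSet_eq_fun (hg ω) hf).compl
  set A : Set X := Xt ∩ {x | f x = 1} with hA
  have hAm : MeasurableSet A := hXt.inter (hf (measurableSet_singleton 1))
  constructor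
  · -- targeted misclassification
    set C : Set X := A ∩ {x | g ω x ≠ 1} with hC
    have hCm : MeasurableSet C := hAm.inter ((hg ω) (measurableSet_singleton 1)).compl
    have hCS : C ⊆ S := by
      rintro x ⟨⟨_, hfx⟩, hgx⟩
      show g ω x ≠ f x
      rw [hfx]; exact hgx
    have hPC : P C < ENNReal.ofReal ε :=
      lt_of_le_of_lt (le_trans (hdom C hCm Set.inter_subset_left)
        (measure_mono hCS)) hω
    have hsplit : A ⊆ C ∪ {x ∈ Xt | g ω x = 1} := by
      rintro x ⟨hx1, hx2⟩
      by_cases h : g ω x = 1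
      · exact Or.inr ⟨hx1, h⟩
      · exact Or.inl ⟨⟨hx1, hx2⟩, h⟩
    have hle : P A ≤ P C + P {x ∈ Xt | g ω x = 1} :=
      le_trans (measure_mono hsplit) (measure_union_le _ _)
    have h1 : ENNReal.ofReal γ < P C + P {x ∈ Xt | g ω x = 1} := lt_of_lt_of_le hmass hle
    have h2 : ENNReal.ofReal γ < ENNReal.ofReal ε + P {x ∈ Xt | g ω x = 1} :=
      lt_of_lt_of_le h1 (add_le_add_left hPC.le _)
    have h3 : ENNReal.ofReal γ - ENNReal.ofReal ε < P {x ∈ Xt | g ω x = 1} := by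
      rw [ENNReal.sub_lt_iff_lt_right ENNReal.ofReal_ne_top
        ((ENNReal.ofReal_le_ofReal_iff hγ.1.le).mpr hγε.le)]
      rwa [add_comm] at h2
    calc ENNReal.ofReal (γ - ε) = ENNReal.ofReal γ - ENNReal.ofReal ε := by
          rw [ENNReal.ofReal_sub _ hε.1.le]
      _ < _ := h3
  · -- accuracy preservation
    have hcover : S ⊆ (S ∩ Xtᶜ) ∪ ((S ∩ A) ∪ (Xt ∩ {x | f x = -1})) := by
      intro x hx
      by_cases hxt : x ∈ Xt
      · rcases hfr x with h1 | h1
        · exact Or.inr (Or.inl ⟨hx, hxt, h1⟩)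
        · exact Or.inr (Or.inr ⟨hxt, h1⟩)
      · exact Or.inl ⟨hx, hxt⟩
    have hle : P S ≤ P (S ∩ Xtᶜ) + (P (S ∩ A) + P (Xt ∩ {x | f x = -1})) :=
      le_trans (measure_mono hcover)
        (le_trans (measure_union_le _ _) (add_le_add_right (measure_union_le _ _) _))
    have h1 : P (S ∩ Xtᶜ) = P' (S ∩ Xtᶜ) := (hagree _ (hSm.inter hXt.compl) Set.inter_subset_right).symm
    have h2 : P (S ∩ A) ≤ P' (S ∩ A) :=
      hdom _ (hSm.inter hAm) Set.inter_subset_right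
    have h3 : P' (S ∩ Xtᶜ) + P' (S ∩ A) = P' ((S ∩ Xtᶜ) ∪ (S ∩ A)) := by
      rw [measure_union _ (hSm.inter hAm)]
      exact Set.disjoint_left.mpr fun x ⟨_, hxc⟩ ⟨_, hxA, _⟩ => hxc hxA
    have h4 : P' ((S ∩ Xtᶜ) ∪ (S ∩ A)) ≤ P' S :=
      measure_mono (Set.union_subset Set.inter_subset_left Set.inter_subset_left)
    have h5 : P (S ∩ Xtᶜ) + P (S ∩ A) < ENNReal.ofReal ε := by
      rw [h1]
      exact lt_of_le_of_lt (le_trans (add_le_add_right h2 _) (le_of_eq h3))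
        (lt_of_le_of_lt h4 hω)
    calc P S ≤ (P (S ∩ Xtᶜ) + P (S ∩ A)) + P (Xt ∩ {x | f x = -1}) := by
          rw [add_assoc]; exact hle
      _ < ENNReal.ofReal ε + ENNReal.ofReal γ' := ENNReal.add_lt_add h5 homit
      _ = ENNReal.ofReal (ε + γ') := (ENNReal.ofReal_add hε.1.le hγ'.1.le).symm
end
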